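/- Let G be a finite simple graph with distinct vertices u, u' and v such that v is the unique neighbor of u among the vertices other than u', and the neighborhood of u' is nonempty and contained in {u, v}. Then b^A_g(G) ≥ b^A_g(G − {u,u'}) and b^I_g(G) ≥ b^I_g(G − {u,u'}), where G − {u,u'} is the graph obtained from G by deleting the vertices u and u' and all edges incident to them. -/

import Mathlib

open SimpleGraph
set_option maxHeartbeats 1600000

/-- The balance score of a state `(S0, S1)` in a graph `G`: the number of edges of `G` with
one endpoint in `S0` and the other in `S1`, minus the number of edges with both endpoints
in `S0` or both endpoints in `S1`. -/
noncomputable def bscore {V : Type*} (G : SimpleGraph V) (S0 S1 : Set V) : ℤ :=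
  ({e ∈ G.edgeSet | ∃ u ∈ S0, ∃ v ∈ S1, e = s(u, v)}.ncard : ℤ) -
  ({e ∈ G.edgeSet | (∃ u ∈ S0, ∃ v ∈ S0, e = s(u, v)) ∨
      (∃ u ∈ S1, ∃ v ∈ S1, e = s(u, v))}.ncard : ℤ)

/-- The value of the balance game computed by backward induction, with `k` moves remaining.
`t = true` means it is Admirable's (the minimizer's) turn, `t = false` means it is
Impish's (the maximizer's) turn.  `S0` is the set of vertices selected by Admirable so far,
`S1` the set selected by Impish. -/
noncomputable def gameVal {V : Type*} [Fintype V] (G : SimpleGraph V) :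
    ℕ → Bool → Finset V → Finset V → ℤ
  | 0, _, S0, S1 => bscore G ↑S0 ↑S1
  | (k + 1), t, S0, S1 =>
    letI := Classical.decEq V
    if h : (Finset.univ \ (S0 ∪ S1)).Nonempty then
      if t then (Finset.univ \ (S0 ∪ S1)).inf' h fun v => gameVal G k false (insert v S0) S1
      else (Finset.univ \ (S0 ∪ S1)).sup' h fun v => gameVal G k true S0 (insert v S1)
    else bscore G ↑S0 ↑S1

/-- The (A)-start game balance number `b^A_g(G)`. -/
noncomputable def balA {V : Type*} [Fintype V] (G : SimpleGraph V) : ℤ :=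
  gameVal G (Fintype.card V) true ∅ ∅

/-- The (I)-start game balance number `b^I_g(G)`. -/
noncomputable def balI {V : Type*} [Fintype V] (G : SimpleGraph V) : ℤ :=
  gameVal G (Fintype.card V) false ∅ ∅

/-- The value of the cordiality game computed by backward induction (final score is
`|bscore|`), with `k` moves remaining; `t = true` means it is Admirable's turn. -/
noncomputable def cordVal {V : Type*} [Fintype V] (G : SimpleGraph V) :
    ℕ → Bool → Finset V → Finset V → ℤ
  | 0, _, S0, S1 => |bscore G ↑S0 ↑S1|
  | (k + 1), t, S0, S1 =>
    letI := Classical.decEq V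
    if h : (Finset.univ \ (S0 ∪ S1)).Nonempty then
      if t then (Finset.univ \ (S0 ∪ S1)).inf' h fun v => cordVal G k false (insert v S0) S1
      else (Finset.univ \ (S0 ∪ S1)).sup' h fun v => cordVal G k true S0 (insert v S1)
    else |bscore G ↑S0 ↑S1|

/-- The (A)-start game cordiality number `c^A_g(G)`. -/
noncomputable def cordA {V : Type*} [Fintype V] (G : SimpleGraph V) : ℤ :=
  cordVal G (Fintype.card V) true ∅ ∅

/-- The (I)-start game cordiality number `c^I_g(G)`. -/
noncomputable def cordI {V : Type*} [Fintype V] (G : SimpleGraph V) : ℤ :=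
  cordVal G (Fintype.card V) false ∅ ∅

lemma gameVal_zero {V : Type*} [Fintype V] (G : SimpleGraph V) (t S0 S1) :
    gameVal G 0 t S0 S1 = bscore G ↑S0 ↑S1 := rfl

lemma gameVal_succ {V : Type*} [Fintype V] [DecidableEq V] (G : SimpleGraph V) (k t S0 S1) :
    gameVal G (k+1) t S0 S1 =
    if h : (Finset.univ \ (S0 ∪ S1)).Nonempty then
      if t then (Finset.univ \ (S0 ∪ S1)).inf' h fun v => gameVal G k false (insert v S0) S1
      else (Finset.univ \ (S0 ∪ S1)).sup' h fun v => gameVal G k true S0 (insert v S1)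
    else bscore G ↑S0 ↑S1 := by
  have h : Classical.decEq V = ‹DecidableEq V› := Subsingleton.elim _ _
  rw [gameVal]
  subst h
  rfl


namespace BalAux

def cS {V : Type*} (G : SimpleGraph V) (A B : Set V) : Set (Sym2 V) :=
  {e ∈ G.edgeSet | ∃ a ∈ A, ∃ b ∈ B, e = s(a, b)}

lemma bscore_eq {V : Type*} (G : SimpleGraph V) (A B : Set V) :
    bscore G A B = ((cS G A B).ncard : ℤ) - ((cS G A A ∪ cS G B B).ncard : ℤ) := by
  unfold bscore
  rw [Set.sep_or]
  rfl

lemma cS_comm {V : Type*} (G : SimpleGraph V) (A B : Set V) : cS G A B = cS G B A := by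
  unfold cS
  ext e
  simp only [Set.mem_setOf_eq]
  constructor <;> rintro ⟨he, a, ha, b, hb, rfl⟩ <;> exact ⟨he, b, hb, a, ha, Sym2.eq_swap⟩

lemma bscore_comm {V : Type*} (G : SimpleGraph V) (A B : Set V) :
    bscore G A B = bscore G B A := by
  rw [bscore_eq, bscore_eq, cS_comm G A B, Set.union_comm]

lemma mem_cS {V : Type*} {G : SimpleGraph V} {A B : Set V} {a b : V}
    (hab : G.Adj a b) (ha : a ∈ A) (hb : b ∈ B) : s(a, b) ∈ cS G A B :=
  ⟨hab, a, ha, b, hb, rfl⟩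

lemma pair_mem {V : Type*} {T : Set V} {x y : V}
    (h : ∃ a ∈ T, ∃ b ∈ T, s(x, y) = s(a, b)) : x ∈ T ∧ y ∈ T := by
  obtain ⟨a, ha, b, hb, he⟩ := h
  rw [Sym2.eq_iff] at he
  rcases he with ⟨rfl, rfl⟩ | ⟨rfl, rfl⟩
  · exact ⟨ha, hb⟩
  · exact ⟨hb, ha⟩

section Transfer
variable {V : Type*} (G : SimpleGraph V) (S : Set V)

/-- transfer: image of cross set of induced graph. -/
lemma image_cS (A B : Set V) :
    Sym2.map (Subtype.val : S → V) '' cS (G.induce S) (Subtype.val ⁻¹' A) (Subtype.val ⁻¹' B)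
      = cS G A B ∩ {e | ∀ x ∈ e, x ∈ S} := by
  ext e
  constructor
  · rintro ⟨e', ⟨he', a, ha, b, hb, rfl⟩, rfl⟩
    refine ⟨⟨?_, a.1, ha, b.1, hb, rfl⟩, ?_⟩
    · simpa using he'
    · intro x hx
      simp only [Sym2.map_pair_eq, Sym2.mem_iff] at hx
      rcases hx with rfl | rfl
      · exact a.2
      · exact b.2
  · rintro ⟨⟨he, a, ha, b, hb, rfl⟩, hN⟩
    have hadj : G.Adj a b := he
    have haS : a ∈ S := hN a (by simp)
    have hbS : b ∈ S := hN b (by simp)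
    refine ⟨s(⟨a, haS⟩, ⟨b, hbS⟩), ⟨?_, ⟨a, haS⟩, ha, ⟨b, hbS⟩, hb, rfl⟩, by simp⟩
    simpa using hadj

lemma ncard_split (X : Set (Sym2 V)) [Finite V] :
    X.ncard = (X ∩ {e | ∀ x ∈ e, x ∈ S}).ncard + (X \ {e | ∀ x ∈ e, x ∈ S}).ncard :=
  (Set.ncard_inter_add_ncard_diff_eq_ncard X _ (Set.toFinite X)).symm

lemma bscore_split [Finite V] (A B : Set V) :
    bscore G A B = bscore (G.induce S) (Subtype.val ⁻¹' A) (Subtype.val ⁻¹' B)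
      + (((cS G A B \ {e | ∀ x ∈ e, x ∈ S}).ncard : ℤ)
         - (((cS G A A ∪ cS G B B) \ {e | ∀ x ∈ e, x ∈ S}).ncard : ℤ)) := by
  have hinj : Function.Injective (Sym2.map (Subtype.val : S → V)) :=
    Sym2.map.injective Subtype.val_injective
  rw [bscore_eq, bscore_eq]
  have h1 : (cS (G.induce S) (Subtype.val ⁻¹' A) (Subtype.val ⁻¹' B)).ncard
      = (cS G A B ∩ {e | ∀ x ∈ e, x ∈ S}).ncard := by
    rw [← image_cS, Set.ncard_image_of_injective _ hinj]
  have h2 : (cS (G.induce S) (Subtype.val ⁻¹' A) (Subtype.val ⁻¹' A)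
        ∪ cS (G.induce S) (Subtype.val ⁻¹' B) (Subtype.val ⁻¹' B)).ncard
      = ((cS G A A ∪ cS G B B) ∩ {e | ∀ x ∈ e, x ∈ S}).ncard := by
    rw [Set.union_inter_distrib_right, ← image_cS, ← image_cS, ← Set.image_union,
      Set.ncard_image_of_injective _ hinj]
  rw [h1, h2, ncard_split S (cS G A B), ncard_split S (cS G A A ∪ cS G B B)]
  push_cast
  ring

end Transfer

section Base
variable {V : Type*} [Fintype V] [DecidableEq V] (G : SimpleGraph V)
variable (u u' v : V)

lemma edge_classify (huu' : u ≠ u') (hu : ∀ w, w ≠ u' → (G.Adj u w ↔ w = v))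
    (hsub : G.neighborSet u' ⊆ {u, v}) :
    ∀ e ∈ G.edgeSet, ¬(∀ x ∈ e, x ∈ {w | w ≠ u ∧ w ≠ u'}) →
      e = s(u, v) ∨ e = s(u, u') ∨ e = s(u', v) := by
  intro e
  induction e with
  | _ a b =>
    intro he hN
    have hadj : G.Adj a b := he
    push_neg at hN
    obtain ⟨x, hx, hxS⟩ := hN
    have hxu : x = u ∨ x = u' := by
      by_contra hc
      push_neg at hc
      exact hxS ⟨hc.1, hc.2⟩
    rw [Sym2.mem_iff] at hx
    -- helper facts
    have keyU : ∀ c : V, G.Adj u c → s(u, c) = s(u, v) ∨ s(u, c) = s(u, u') := by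
      intro c hc
      by_cases hcu' : c = u'
      · exact Or.inr (by rw [hcu'])
      · exact Or.inl (by rw [(hu c hcu').mp hc])
    have keyU' : ∀ c : V, G.Adj u' c → s(u', c) = s(u, u') ∨ s(u', c) = s(u', v) := by
      intro c hc
      have : c ∈ ({u, v} : Set V) := hsub hc
      rcases this with rfl | rfl
      · exact Or.inl (Sym2.eq_swap)
      · exact Or.inr rfl
    rcases hx with rfl | rfl
    · rcases hxu with rfl | rfl
      · rcases keyU b hadj with h | h
        · exact Or.inl h
        · exact Or.inr (Or.inl h)
      · rcases keyU' b hadj with h | h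
        · exact Or.inr (Or.inl h)
        · exact Or.inr (Or.inr h)
    · rcases hxu with rfl | rfl
      · rcases keyU a hadj.symm with h | h
        · exact Or.inl (Sym2.eq_swap.trans h)
        · exact Or.inr (Or.inl (Sym2.eq_swap.trans h))
      · rcases keyU' a hadj.symm with h | h
        · exact Or.inr (Or.inl (Sym2.eq_swap.trans h))
        · exact Or.inr (Or.inr (Sym2.eq_swap.trans h))

lemma bscore_base (huu' : u ≠ u') (huv : u ≠ v) (hu'v : u' ≠ v)
    (hu : ∀ w, w ≠ u' → (G.Adj u w ↔ w = v))
    (hne : (G.neighborSet u').Nonempty) (hsub : G.neighborSet u' ⊆ {u, v})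
    (S0 S1 : Set V) (hdisj : Disjoint S0 S1) (hcover : S0 ∪ S1 = Set.univ)
    (h0 : u ∈ S0) (h1 : u' ∈ S1) :
    bscore (G.induce {w | w ≠ u ∧ w ≠ u'}) (Subtype.val ⁻¹' S0) (Subtype.val ⁻¹' S1)
      ≤ bscore G S0 S1 := by
  set S : Set V := {w | w ≠ u ∧ w ≠ u'} with hS
  set N : Set (Sym2 V) := {e | ∀ x ∈ e, x ∈ S} with hN
  have huN : ∀ e : Sym2 V, u ∈ e → e ∉ N := fun e heu hmem => (hmem u heu).1 rfl
  have hu'N : ∀ e : Sym2 V, u' ∈ e → e ∉ N := fun e heu hmem => (hmem u' heu).2 rfl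
  have hd : ∀ x, x ∈ S0 → x ∉ S1 := fun x hx => Set.disjoint_left.mp hdisj hx
  rw [bscore_split G S S0 S1]
  have key : ((cS G S0 S0 ∪ cS G S1 S1) \ N).ncard ≤ (cS G S0 S1 \ N).ncard := by
    have hvmem : v ∈ S0 ∪ S1 := hcover ▸ Set.mem_univ v
    have classify := edge_classify G u u' v huu' hu hsub
    -- membership exclusions for the mono set
    have excl_uu' : s(u, u') ∉ (cS G S0 S0 ∪ cS G S1 S1) := by
      rintro (⟨-, h⟩ | ⟨-, h⟩)
      · exact hd u' (pair_mem h).2 h1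
      · exact hd u h0 (pair_mem h).1
    rcases hvmem with hv0 | hv1
    swap
    · -- v ∈ S1 : mono ⊆ {s(u',v)}, s(u,v) ∈ cross
      have hM : (cS G S0 S0 ∪ cS G S1 S1) \ N ⊆ {s(u', v)} := by
        rintro e ⟨hm, hn⟩
        have he : e ∈ G.edgeSet := by rcases hm with ⟨he, -⟩ | ⟨he, -⟩ <;> exact he
        rcases classify e he hn with rfl | rfl | rfl
        · exfalso
          rcases hm with ⟨-, h⟩ | ⟨-, h⟩
          · exact hd v (pair_mem h).2 hv1
          · exact hd u h0 (pair_mem h).1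
        · exact absurd hm excl_uu'
        · rfl
      have hC : s(u, v) ∈ cS G S0 S1 \ N := by
        refine ⟨mem_cS ((hu v (Ne.symm hu'v)).mpr rfl) h0 hv1, huN _ (by simp)⟩
      calc ((cS G S0 S0 ∪ cS G S1 S1) \ N).ncard ≤ 1 := by
            simpa using Set.ncard_le_ncard hM (Set.finite_singleton _)
        _ ≤ (cS G S0 S1 \ N).ncard :=
            (Set.ncard_pos (Set.toFinite _)).mpr ⟨_, hC⟩
    · -- v ∈ S0 : mono ⊆ {s(u,v)}, cross nonempty via u' neighbor
      have hM : (cS G S0 S0 ∪ cS G S1 S1) \ N ⊆ {s(u, v)} := by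
        rintro e ⟨hm, hn⟩
        have he : e ∈ G.edgeSet := by rcases hm with ⟨he, -⟩ | ⟨he, -⟩ <;> exact he
        rcases classify e he hn with rfl | rfl | rfl
        · rfl
        · exact absurd hm excl_uu'
        · exfalso
          rcases hm with ⟨-, h⟩ | ⟨-, h⟩
          · exact hd u' (pair_mem h).1 h1
          · exact hd v hv0 (pair_mem h).2
      have hC : (cS G S0 S1 \ N).Nonempty := by
        obtain ⟨w, hw⟩ := hne
        have hw' : w ∈ ({u, v} : Set V) := hsub hw
        rcases hw' with h | h
        · rw [h] at hw
          exact ⟨s(u, u'), ⟨mem_cS (hw.symm) h0 h1, huN _ (by simp)⟩⟩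
        · rw [h] at hw
          exact ⟨s(v, u'), ⟨mem_cS (hw.symm) hv0 h1, hu'N _ (by simp)⟩⟩
      calc ((cS G S0 S0 ∪ cS G S1 S1) \ N).ncard ≤ 1 := by
            simpa using Set.ncard_le_ncard hM (Set.finite_singleton _)
        _ ≤ (cS G S0 S1 \ N).ncard := (Set.ncard_pos (Set.toFinite _)).mpr hC
  have h2 := Int.ofNat_le.mpr key
  simp only [hN] at h2
  omega

lemma bscore_base' (huu' : u ≠ u') (huv : u ≠ v) (hu'v : u' ≠ v)
    (hu : ∀ w, w ≠ u' → (G.Adj u w ↔ w = v))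
    (hne : (G.neighborSet u').Nonempty) (hsub : G.neighborSet u' ⊆ {u, v})
    (S0 S1 : Set V) (hdisj : Disjoint S0 S1) (hcover : S0 ∪ S1 = Set.univ)
    (hside : (u ∈ S0 ∧ u' ∈ S1) ∨ (u ∈ S1 ∧ u' ∈ S0)) :
    bscore (G.induce {w | w ≠ u ∧ w ≠ u'}) (Subtype.val ⁻¹' S0) (Subtype.val ⁻¹' S1)
      ≤ bscore G S0 S1 := by
  rcases hside with ⟨h0, h1⟩ | ⟨h0, h1⟩
  · exact bscore_base G u u' v huu' huv hu'v hu hne hsub S0 S1 hdisj hcover h0 h1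
  · rw [bscore_comm G S0 S1, bscore_comm (G.induce _) _ _]
    exact bscore_base G u u' v huu' huv hu'v hu hne hsub S1 S0 hdisj.symm
      (Set.union_comm S0 S1 ▸ hcover) h0 h1

end Base

section Game
variable {V : Type*} [Fintype V] [DecidableEq V]

abbrev Sv (u u' : V) : Set V := {w | w ≠ u ∧ w ≠ u'}

def fsub (u u' : V) (T : Finset V) : Finset ↥(Sv u u') := T.subtype (· ∈ Sv u u')

variable {u u' : V}

lemma mem_fsub {x : ↥(Sv u u')} {T : Finset V} : x ∈ fsub u u' T ↔ ↑x ∈ T := by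
  unfold fsub; exact Finset.mem_subtype

lemma fsub_coe (T : Finset V) :
    (↑(fsub u u' T) : Set ↥(Sv u u')) = Subtype.val ⁻¹' ↑T := by
  ext x; simp only [Finset.mem_coe, mem_fsub, Set.mem_preimage]

lemma fsub_insert_mem {w : V} (hw : w ∈ Sv u u') (T : Finset V) :
    fsub u u' (insert w T) = insert ⟨w, hw⟩ (fsub u u' T) := by
  ext x
  simp only [mem_fsub, Finset.mem_insert, Subtype.ext_iff]

lemma fsub_insert_not {w : V} (hw : w ∉ Sv u u') (T : Finset V) :
    fsub u u' (insert w T) = fsub u u' T := by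
  ext x
  simp only [mem_fsub, Finset.mem_insert]
  constructor
  · rintro (h | h)
    · exact absurd (h ▸ x.2) hw
    · exact h
  · exact Or.inr

lemma fsub_empty : fsub u u' (∅ : Finset V) = ∅ := by
  ext x; simp only [mem_fsub, Finset.notMem_empty, iff_false, Finset.notMem_empty]

lemma rem_eq (T0 T1 : Finset V) :
    Finset.univ \ (fsub u u' T0 ∪ fsub u u' T1) = fsub u u' (Finset.univ \ (T0 ∪ T1)) := by
  ext x
  simp only [Finset.mem_sdiff, Finset.mem_union, Finset.mem_univ, true_and, mem_fsub,
    not_or]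

lemma fsub_card (T : Finset V) :
    (fsub u u' T).card = (T.filter (· ∈ Sv u u')).card :=
  Finset.card_subtype _ _

lemma fsub_card_of_mem (huu' : u ≠ u') {T : Finset V} (h1 : u ∈ T) (h2 : u' ∈ T) :
    (fsub u u' T).card + 2 = T.card := by
  rw [fsub_card]
  have h : T.filter (· ∈ Sv u u') = T \ {u, u'} := by
    ext x
    simp only [Finset.mem_filter, Finset.mem_sdiff, Finset.mem_insert, Finset.mem_singleton]
    constructor
    · rintro ⟨hx, h⟩; exact ⟨hx, by rintro (rfl | rfl) <;> simp [Sv] at h⟩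
    · rintro ⟨hx, h⟩; push_neg at h; exact ⟨hx, h.1, h.2⟩
  rw [h, Finset.card_sdiff_of_subset (by intro x hx; simp at hx; rcases hx with rfl | rfl <;> assumption)]
  have hc : ({u, u'} : Finset V).card = 2 := by
    rw [Finset.card_insert_of_notMem (by simp [huu']), Finset.card_singleton]
  rw [hc]
  have : 2 ≤ T.card := by
    calc 2 = ({u, u'} : Finset V).card := hc.symm
    _ ≤ T.card := Finset.card_le_card (by intro x hx; simp at hx; rcases hx with rfl | rfl <;> assumption)
  omega

lemma fsub_card_of_not_mem {T : Finset V} (h1 : u ∉ T) (h2 : u' ∉ T) :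
    (fsub u u' T).card = T.card := by
  rw [fsub_card]
  congr 1
  apply Finset.filter_true_of_mem
  intro x hx
  exact ⟨fun h => h1 (h ▸ hx), fun h => h2 (h ▸ hx)⟩

lemma remaining_insert_left (S0 S1 : Finset V) (w : V) :
    Finset.univ \ (insert w S0 ∪ S1) = (Finset.univ \ (S0 ∪ S1)).erase w := by
  ext x
  simp only [Finset.mem_sdiff, Finset.mem_union, Finset.mem_insert, Finset.mem_erase,
    Finset.mem_univ, true_and]
  tauto

lemma remaining_insert_right (S0 S1 : Finset V) (w : V) :
    Finset.univ \ (S0 ∪ insert w S1) = (Finset.univ \ (S0 ∪ S1)).erase w := by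
  ext x
  simp only [Finset.mem_sdiff, Finset.mem_union, Finset.mem_insert, Finset.mem_erase,
    Finset.mem_univ, true_and]
  tauto

end Game

section R
variable {V : Type*} [Fintype V] [DecidableEq V]

lemma lemR (G : SimpleGraph V) (u u' v : V) (huu' : u ≠ u') (huv : u ≠ v) (hu'v : u' ≠ v)
    (hu : ∀ w, w ≠ u' → (G.Adj u w ↔ w = v))
    (hne : (G.neighborSet u').Nonempty) (hsub : G.neighborSet u' ⊆ {u, v}) :
    ∀ (k : ℕ) (t : Bool) (S0 S1 : Finset V), Disjoint S0 S1 →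
    ((u ∈ S0 ∧ u' ∈ S1) ∨ (u ∈ S1 ∧ u' ∈ S0)) →
    (Finset.univ \ (S0 ∪ S1)).card = k →
    gameVal (G.induce (Sv u u')) k t (fsub u u' S0) (fsub u u' S1) ≤ gameVal G k t S0 S1 := by
  intro k
  induction k with
  | zero =>
    intro t S0 S1 hdisj hside hcard
    have hcover : S0 ∪ S1 = Finset.univ := by
      rw [Finset.card_eq_zero, Finset.sdiff_eq_empty_iff_subset] at hcard
      exact Finset.univ_subset_iff.mp hcard
    show bscore _ _ _ ≤ bscore _ _ _
    rw [fsub_coe, fsub_coe]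
    refine bscore_base' G u u' v huu' huv hu'v hu hne hsub _ _
      (Finset.disjoint_coe.mpr hdisj) ?_ (by simpa using hside)
    rw [← Finset.coe_union, hcover, Finset.coe_univ]
  | succ k ih =>
    intro t S0 S1 hdisj hside hcard
    have hu01 : u ∈ S0 ∪ S1 := by
      rcases hside with ⟨h, -⟩ | ⟨h, -⟩
      · exact Finset.mem_union_left _ h
      · exact Finset.mem_union_right _ h
    have hu'01 : u' ∈ S0 ∪ S1 := by
      rcases hside with ⟨-, h⟩ | ⟨-, h⟩
      · exact Finset.mem_union_right _ h
      · exact Finset.mem_union_left _ h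
    have hrem : (Finset.univ \ (S0 ∪ S1)).Nonempty :=
      Finset.card_pos.mp (by omega)
    have hrem' : (Finset.univ \ (fsub u u' S0 ∪ fsub u u' S1)).Nonempty := by
      obtain ⟨x, hx⟩ := hrem
      have hx' : x ∉ S0 ∪ S1 := (Finset.mem_sdiff.mp hx).2
      have hxS : x ∈ Sv u u' := ⟨fun h => hx' (h ▸ hu01), fun h => hx' (h ▸ hu'01)⟩
      exact ⟨⟨x, hxS⟩, by rw [rem_eq]; exact mem_fsub.mpr hx⟩
    rw [gameVal_succ, dif_pos hrem', gameVal_succ, dif_pos hrem]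
    cases t with
    | true =>
      simp only [if_true]
      apply Finset.le_inf'
      intro w hw
      have hw' : w ∉ S0 ∪ S1 := (Finset.mem_sdiff.mp hw).2
      have hwS : w ∈ Sv u u' := ⟨fun h => hw' (h ▸ hu01), fun h => hw' (h ▸ hu'01)⟩
      have hmem : (⟨w, hwS⟩ : ↥(Sv u u')) ∈ Finset.univ \ (fsub u u' S0 ∪ fsub u u' S1) := by
        rw [rem_eq]; exact mem_fsub.mpr hw
      refine le_trans (Finset.inf'_le _ hmem) ?_
      rw [← fsub_insert_mem hwS]
      refine ih false (insert w S0) S1 ?_ ?_ ?_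
      · exact Finset.disjoint_insert_left.mpr
          ⟨fun h => hw' (Finset.mem_union_right _ h), hdisj⟩
      · rcases hside with ⟨h0, h1⟩ | ⟨h0, h1⟩
        · exact Or.inl ⟨Finset.mem_insert_of_mem h0, h1⟩
        · exact Or.inr ⟨h0, Finset.mem_insert_of_mem h1⟩
      · rw [remaining_insert_left, Finset.card_erase_of_mem hw]; omega
    | false =>
      simp only [Bool.false_eq_true, if_false]
      apply Finset.sup'_le
      intro w' hw'
      have hwmem : ↑w' ∈ Finset.univ \ (S0 ∪ S1) := by
        rw [rem_eq] at hw'; exact mem_fsub.mp hw'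
      refine le_trans ?_ (Finset.le_sup' _ hwmem)
      have hins : insert w' (fsub u u' S1) = fsub u u' (insert ↑w' S1) := by
        rw [fsub_insert_mem w'.2]
      rw [hins]
      refine ih true S0 (insert ↑w' S1) ?_ ?_ ?_
      · have hw0 : ↑w' ∉ S0 := fun h =>
          (Finset.mem_sdiff.mp hwmem).2 (Finset.mem_union_left _ h)
        exact Finset.disjoint_insert_right.mpr ⟨hw0, hdisj⟩
      · rcases hside with ⟨h0, h1⟩ | ⟨h0, h1⟩
        · exact Or.inl ⟨h0, Finset.mem_insert_of_mem h1⟩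
        · exact Or.inr ⟨Finset.mem_insert_of_mem h0, h1⟩
      · rw [remaining_insert_right, Finset.card_erase_of_mem hwmem]; omega

end R




section Q
variable {V : Type*} [Fintype V] [DecidableEq V]

lemma lemQ (G : SimpleGraph V) (u u' v : V) (huu' : u ≠ u') (huv : u ≠ v) (hu'v : u' ≠ v)
    (hu : ∀ w, w ≠ u' → (G.Adj u w ↔ w = v))
    (hne : (G.neighborSet u').Nonempty) (hsub : G.neighborSet u' ⊆ {u, v}) :
    ∀ (k : ℕ) (t : Bool) (S0 S1 : Finset V), Disjoint S0 S1 →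
    u ∉ S0 ∪ S1 → u' ∉ S0 ∪ S1 →
    (Finset.univ \ (S0 ∪ S1)).card = k + 2 →
    gameVal (G.induce (Sv u u')) k t (fsub u u' S0) (fsub u u' S1)
      ≤ gameVal G (k + 2) t S0 S1 := by
  intro k
  induction k with
  | zero =>
    intro t S0 S1 hdisj hu01 hu'01 hcard
    have humem : u ∈ Finset.univ \ (S0 ∪ S1) := Finset.mem_sdiff.mpr ⟨Finset.mem_univ _, hu01⟩
    have hu'mem : u' ∈ Finset.univ \ (S0 ∪ S1) := Finset.mem_sdiff.mpr ⟨Finset.mem_univ _, hu'01⟩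
    have hrem : (Finset.univ \ (S0 ∪ S1)).Nonempty := ⟨u, humem⟩
    have hset : ({u, u'} : Finset V) = Finset.univ \ (S0 ∪ S1) := by
      apply Finset.eq_of_subset_of_card_le
      · intro x hx
        rcases Finset.mem_insert.mp hx with rfl | hx
        · exact humem
        · rw [Finset.mem_singleton.mp hx]; exact hu'mem
      · rw [hcard, Finset.card_insert_of_notMem (by simp [huu']), Finset.card_singleton]
    rw [show (0:ℕ) + 2 = 1 + 1 by rfl, gameVal_succ, dif_pos hrem]
    cases t with
    | true =>
      simp only [if_true]
      apply Finset.le_inf'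
      intro w hw
      have hw2 : w = u ∨ w = u' := by
        have := hset ▸ hw
        simpa using this
      rcases hw2 with h | h
      · -- A plays u; then remaining = {u'}
        have h2 : u = w := h.symm
        subst h2
        have hrem2 : u' ∈ Finset.univ \ (insert u S0 ∪ S1) := by
          rw [remaining_insert_left]
          exact Finset.mem_erase.mpr ⟨Ne.symm huu', hu'mem⟩
        rw [gameVal_succ, dif_pos ⟨u', hrem2⟩]
        simp only [Bool.false_eq_true, if_false]
        refine le_trans ?_ (Finset.le_sup' _ hrem2)
        have h := lemR G u u' v huu' huv hu'v hu hne hsub 0 true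
          (insert u S0) (insert u' S1) ?_ (Or.inl ⟨Finset.mem_insert_self _ _, Finset.mem_insert_self _ _⟩) ?_
        · rwa [fsub_insert_not (by simp [Sv]), fsub_insert_not (by simp [Sv])] at h
        · rw [Finset.disjoint_insert_left, Finset.disjoint_insert_right]
          refine ⟨by simp only [Finset.mem_insert, not_or]; exact ⟨huu', fun h => hu01 (Finset.mem_union_right _ h)⟩, ?_, hdisj⟩
          exact fun h => hu'01 (Finset.mem_union_left _ h)
        · rw [remaining_insert_left, remaining_insert_right,
            Finset.card_erase_of_mem (Finset.mem_erase.mpr ⟨huu', humem⟩),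
            Finset.card_erase_of_mem hu'mem]
          omega
      · -- A plays u'; then remaining = {u}
        have h2 : u' = w := h.symm
        subst h2
        have hrem2 : u ∈ Finset.univ \ (insert u' S0 ∪ S1) := by
          rw [remaining_insert_left]
          exact Finset.mem_erase.mpr ⟨huu', humem⟩
        rw [gameVal_succ, dif_pos ⟨u, hrem2⟩]
        simp only [Bool.false_eq_true, if_false]
        refine le_trans ?_ (Finset.le_sup' _ hrem2)
        have h := lemR G u u' v huu' huv hu'v hu hne hsub 0 true
          (insert u' S0) (insert u S1) ?_ (Or.inr ⟨Finset.mem_insert_self _ _, Finset.mem_insert_self _ _⟩) ?_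
        · rwa [fsub_insert_not (by simp [Sv]), fsub_insert_not (by simp [Sv])] at h
        · rw [Finset.disjoint_insert_left, Finset.disjoint_insert_right]
          refine ⟨by simp only [Finset.mem_insert, not_or]; exact ⟨Ne.symm huu', fun h => hu'01 (Finset.mem_union_right _ h)⟩, ?_, hdisj⟩
          exact fun h => hu01 (Finset.mem_union_left _ h)
        · rw [remaining_insert_left, remaining_insert_right,
            Finset.card_erase_of_mem (Finset.mem_erase.mpr ⟨Ne.symm huu', hu'mem⟩),
            Finset.card_erase_of_mem humem]
          omega
    | false =>
      simp only [Bool.false_eq_true, if_false]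
      refine le_trans ?_ (Finset.le_sup' _ humem)
      -- goal: bscore ≤ gameVal G 1 true S0 (insert u S1)
      have hrem2 : u' ∈ Finset.univ \ (S0 ∪ insert u S1) := by
        rw [remaining_insert_right]
        exact Finset.mem_erase.mpr ⟨Ne.symm huu', hu'mem⟩
      rw [gameVal_succ, dif_pos ⟨u', hrem2⟩]
      simp only [if_true]
      apply Finset.le_inf'
      intro x hx
      have hx2 : x = u' := by
        have hx3 : x ∈ Finset.univ \ (S0 ∪ S1) := by
          rw [remaining_insert_right] at hx
          exact Finset.mem_erase.mp hx |>.2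
        have hx4 := hset ▸ hx3
        have hx5 : x ≠ u := by
          intro h
          subst h
          rw [remaining_insert_right] at hx
          exact (Finset.mem_erase.mp hx).1 rfl
        simpa [hx5] using hx4
      have hx6 : u' = x := hx2.symm
      subst hx6
      have h := lemR G u u' v huu' huv hu'v hu hne hsub 0 false
        (insert u' S0) (insert u S1) ?_ (Or.inr ⟨Finset.mem_insert_self _ _, Finset.mem_insert_self _ _⟩) ?_
      · rwa [fsub_insert_not (by simp [Sv]), fsub_insert_not (by simp [Sv])] at h
      · rw [Finset.disjoint_insert_left, Finset.disjoint_insert_right]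
        refine ⟨by simp only [Finset.mem_insert, not_or]; exact ⟨Ne.symm huu', fun h => hu'01 (Finset.mem_union_right _ h)⟩, ?_, hdisj⟩
        exact fun h => hu01 (Finset.mem_union_left _ h)
      · rw [remaining_insert_left, remaining_insert_right,
          Finset.card_erase_of_mem (Finset.mem_erase.mpr ⟨Ne.symm huu', hu'mem⟩),
          Finset.card_erase_of_mem humem]
        omega
  | succ m ih =>
    intro t S0 S1 hdisj hu01 hu'01 hcard
    have humem : u ∈ Finset.univ \ (S0 ∪ S1) := Finset.mem_sdiff.mpr ⟨Finset.mem_univ _, hu01⟩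
    have hu'mem : u' ∈ Finset.univ \ (S0 ∪ S1) := Finset.mem_sdiff.mpr ⟨Finset.mem_univ _, hu'01⟩
    have hrem : (Finset.univ \ (S0 ∪ S1)).Nonempty := ⟨u, humem⟩
    have hremS : (Finset.univ \ (fsub u u' S0 ∪ fsub u u' S1)).Nonempty := by
      rw [rem_eq]
      have : (Finset.univ \ (S0 ∪ S1)).card = m + 3 := hcard
      obtain ⟨T, hT⟩ : ∃ T, Finset.univ \ (S0 ∪ S1) = T := ⟨_, rfl⟩
      -- pick an element different from u, u'
      have h3 : 2 < (Finset.univ \ (S0 ∪ S1)).card := by omega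
      obtain ⟨x, hx, hxuu⟩ : ∃ x ∈ Finset.univ \ (S0 ∪ S1), x ≠ u ∧ x ≠ u' := by
        by_contra hcon
        push_neg at hcon
        have hsub2 : Finset.univ \ (S0 ∪ S1) ⊆ {u, u'} := by
          intro x hx
          by_cases h1 : x = u
          · simp [h1]
          · rcases hcon x hx h1 with h2
            simp [h2]
        have := Finset.card_le_card hsub2
        have hc2 : ({u, u'} : Finset V).card ≤ 2 := Finset.card_insert_le _ _ |>.trans (by simp)
        omega
      exact ⟨⟨x, hxuu⟩, mem_fsub.mpr hx⟩
    rw [show m + 1 + 2 = (m + 2) + 1 by rfl, gameVal_succ G (m+2) t S0 S1, dif_pos hrem]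
    cases t with
    | true =>
      simp only [if_true]
      apply Finset.le_inf'
      intro w hw
      have hw' : w ∉ S0 ∪ S1 := (Finset.mem_sdiff.mp hw).2
      by_cases hwu : w = u
      · have h2 : u = w := hwu.symm
        subst h2
        have hrem2 : u' ∈ Finset.univ \ (insert u S0 ∪ S1) := by
          rw [remaining_insert_left]
          exact Finset.mem_erase.mpr ⟨Ne.symm huu', hu'mem⟩
        rw [show m + 2 = (m + 1) + 1 by rfl,
          gameVal_succ G (m+1) false (insert u S0) S1, dif_pos ⟨u', hrem2⟩]
        simp only [Bool.false_eq_true, if_false]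
        refine le_trans ?_ (Finset.le_sup' _ hrem2)
        have h := lemR G u u' v huu' huv hu'v hu hne hsub (m+1) true
          (insert u S0) (insert u' S1) ?_ (Or.inl ⟨Finset.mem_insert_self _ _, Finset.mem_insert_self _ _⟩) ?_
        · rwa [fsub_insert_not (by simp [Sv]), fsub_insert_not (by simp [Sv])] at h
        · rw [Finset.disjoint_insert_left, Finset.disjoint_insert_right]
          refine ⟨by simp only [Finset.mem_insert, not_or]; exact ⟨huu', fun h => hu01 (Finset.mem_union_right _ h)⟩, ?_, hdisj⟩
          exact fun h => hu'01 (Finset.mem_union_left _ h)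
        · rw [remaining_insert_left, remaining_insert_right,
            Finset.card_erase_of_mem (Finset.mem_erase.mpr ⟨huu', humem⟩),
            Finset.card_erase_of_mem hu'mem]
          omega
      · by_cases hwu' : w = u'
        · have h2 : u' = w := hwu'.symm
          subst h2
          have hrem2 : u ∈ Finset.univ \ (insert u' S0 ∪ S1) := by
            rw [remaining_insert_left]
            exact Finset.mem_erase.mpr ⟨huu', humem⟩
          rw [show m + 2 = (m + 1) + 1 by rfl,
            gameVal_succ G (m+1) false (insert u' S0) S1, dif_pos ⟨u, hrem2⟩]
          simp only [Bool.false_eq_true, if_false]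
          refine le_trans ?_ (Finset.le_sup' _ hrem2)
          have h := lemR G u u' v huu' huv hu'v hu hne hsub (m+1) true
            (insert u' S0) (insert u S1) ?_ (Or.inr ⟨Finset.mem_insert_self _ _, Finset.mem_insert_self _ _⟩) ?_
          · rwa [fsub_insert_not (by simp [Sv]), fsub_insert_not (by simp [Sv])] at h
          · rw [Finset.disjoint_insert_left, Finset.disjoint_insert_right]
            refine ⟨by simp only [Finset.mem_insert, not_or]; exact ⟨Ne.symm huu', fun h => hu'01 (Finset.mem_union_right _ h)⟩, ?_, hdisj⟩
            exact fun h => hu01 (Finset.mem_union_left _ h)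
          · rw [remaining_insert_left, remaining_insert_right,
              Finset.card_erase_of_mem (Finset.mem_erase.mpr ⟨Ne.symm huu', hu'mem⟩),
              Finset.card_erase_of_mem humem]
            omega
        · -- w is a G'-vertex
          have hwS : w ∈ Sv u u' := ⟨hwu, hwu'⟩
          have hmemS : (⟨w, hwS⟩ : ↥(Sv u u')) ∈
              Finset.univ \ (fsub u u' S0 ∪ fsub u u' S1) := by
            rw [rem_eq]; exact mem_fsub.mpr hw
          rw [gameVal_succ (G.induce (Sv u u')) m true (fsub u u' S0) (fsub u u' S1),
            dif_pos hremS]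
          simp only [if_true]
          refine le_trans (Finset.inf'_le _ hmemS) ?_
          rw [← fsub_insert_mem hwS]
          refine ih false (insert w S0) S1 ?_ ?_ ?_ ?_
          · exact Finset.disjoint_insert_left.mpr
              ⟨fun h => hw' (Finset.mem_union_right _ h), hdisj⟩
          · simp only [Finset.mem_union, Finset.mem_insert, not_or]
            exact ⟨⟨fun h => hwu (h.symm), fun h => hu01 (Finset.mem_union_left _ h)⟩,
              fun h => hu01 (Finset.mem_union_right _ h)⟩
          · simp only [Finset.mem_union, Finset.mem_insert, not_or]
            exact ⟨⟨fun h => hwu' (h.symm), fun h => hu'01 (Finset.mem_union_left _ h)⟩,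
              fun h => hu'01 (Finset.mem_union_right _ h)⟩
          · rw [remaining_insert_left, Finset.card_erase_of_mem hw]
            omega
    | false =>
      simp only [Bool.false_eq_true, if_false]
      rw [gameVal_succ (G.induce (Sv u u')) m false (fsub u u' S0) (fsub u u' S1),
        dif_pos hremS]
      simp only [Bool.false_eq_true, if_false]
      apply Finset.sup'_le
      intro w' hw'
      have hwmem : ↑w' ∈ Finset.univ \ (S0 ∪ S1) := by
        rw [rem_eq] at hw'; exact mem_fsub.mp hw'
      refine le_trans ?_ (Finset.le_sup' _ hwmem)
      have hins : insert w' (fsub u u' S1) = fsub u u' (insert ↑w' S1) := by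
        rw [fsub_insert_mem w'.2]
      rw [hins]
      refine ih true S0 (insert (w' : V) S1) ?_ ?_ ?_ ?_
      · exact Finset.disjoint_insert_right.mpr
          ⟨fun h => (Finset.mem_sdiff.mp hwmem).2 (Finset.mem_union_left _ h), hdisj⟩
      · simp only [Finset.mem_union, Finset.mem_insert, not_or]
        exact ⟨fun h => hu01 (Finset.mem_union_left _ h),
          fun h => (w'.2).1 h.symm, fun h => hu01 (Finset.mem_union_right _ h)⟩
      · simp only [Finset.mem_union, Finset.mem_insert, not_or]
        exact ⟨fun h => hu'01 (Finset.mem_union_left _ h),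
          fun h => (w'.2).2 h.symm, fun h => hu'01 (Finset.mem_union_right _ h)⟩
      · rw [remaining_insert_right, Finset.card_erase_of_mem hwmem]
        omega

end Q

end BalAux

open BalAux in
theorem statement_9 {V : Type*} [Fintype V] [DecidableEq V] (G : SimpleGraph V)
    (u u' v : V) (huu' : u ≠ u') (huv : u ≠ v) (hu'v : u' ≠ v)
    (hu : ∀ w, w ≠ u' → (G.Adj u w ↔ w = v))
    (hne : (G.neighborSet u').Nonempty) (hsub : G.neighborSet u' ⊆ {u, v}) :
    balA (G.induce {w | w ≠ u ∧ w ≠ u'}) ≤ balA G ∧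
    balI (G.induce {w | w ≠ u ∧ w ≠ u'}) ≤ balI G := by
  have hn : 1 < Fintype.card V := Fintype.one_lt_card_iff.mpr ⟨u, u', huu'⟩
  have hcS : Fintype.card ↥{w | w ≠ u ∧ w ≠ u'} = Fintype.card V - 2 := by
    rw [Fintype.card_subtype]
    have h : Finset.univ.filter (fun x => x ∈ {w | w ≠ u ∧ w ≠ u'}) = Finset.univ \ {u, u'} := by
      ext x
      simp only [Finset.mem_filter, Finset.mem_univ, true_and, Set.mem_setOf_eq,
        Finset.mem_sdiff, Finset.mem_insert, Finset.mem_singleton, not_or]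
    rw [h, Finset.card_sdiff_of_subset (by intro x hx; exact Finset.mem_univ x)]
    rw [Finset.card_insert_of_notMem (by simp [huu']), Finset.card_singleton,
      Finset.card_univ]
  have main : ∀ t, gameVal (G.induce (Sv u u')) (Fintype.card V - 2) t ∅ ∅
      ≤ gameVal G (Fintype.card V) t ∅ ∅ := by
    intro t
    have hq := lemQ G u u' v huu' huv hu'v hu hne hsub (Fintype.card V - 2) t ∅ ∅
      (by simp) (by simp) (by simp)
      (by rw [Finset.empty_union, Finset.sdiff_empty, Finset.card_univ]; omega)
    rw [show Fintype.card V - 2 + 2 = Fintype.card V by omega] at hq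
    simp only [fsub_empty] at hq
    exact hq
  constructor
  · show gameVal _ _ true ∅ ∅ ≤ gameVal _ _ true ∅ ∅
    rw [hcS]
    exact main true
  · show gameVal _ _ false ∅ ∅ ≤ gameVal _ _ false ∅ ∅
    rw [hcS]
    exact main false
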